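/- (M. Brancheva) Let κ(n) denote the number of Pythagorean triangles with cathetus n, i.e. the number of pairs (x, z) of positive integers with x² + n² = z². Then κ(n) = O(n^ε) for every ε > 0; in particular, for every real ε > 0 the quotient κ(n)/n^ε tends to 0 as n → ∞. -/

import Mathlib

open Filter Asymptotics

/-- `kappa n` is the number of Pythagorean triangles with cathetus `n`,
i.e. the number of pairs `(x, z)` of positive integers with
`x² + n² = z²`. -/
noncomputable def kappa (n : ℕ) : ℕ :=
  Nat.card {p : ℕ × ℕ // 0 < p.1 ∧ 0 < p.2 ∧ p.1 ^ 2 + n ^ 2 = p.2 ^ 2}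

lemma sol_fact {n x z : ℕ} (hn : 1 ≤ n) (h : x ^ 2 + n ^ 2 = z ^ 2) :
    x < z ∧ (z - x) * (z + x) = n ^ 2 := by
  have hxz : x < z := by
    by_contra hc
    push_neg at hc
    have : z ^ 2 ≤ x ^ 2 := Nat.pow_le_pow_left hc 2
    have : 0 < n ^ 2 := by positivity
    omega
  have h2 := Nat.sq_sub_sq z x
  have h3 : z ^ 2 - x ^ 2 = n ^ 2 := by omega
  refine ⟨hxz, ?_⟩
  rw [← h3, h2]; ring

lemma kappa_le (n : ℕ) (hn : 1 ≤ n) : kappa n ≤ (n ^ 2).divisors.card := by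
  have hn2 : n ^ 2 ≠ 0 := by positivity
  rw [kappa, ← Nat.card_eq_finsetCard ((n ^ 2).divisors)]
  have hmem : ∀ p : {p : ℕ × ℕ // 0 < p.1 ∧ 0 < p.2 ∧ p.1 ^ 2 + n ^ 2 = p.2 ^ 2},
      (p.1.2 - p.1.1) ∈ (n ^ 2).divisors := by
    rintro ⟨⟨x, z⟩, hx, hz, h⟩
    obtain ⟨hxz, hf⟩ := sol_fact hn h
    exact Nat.mem_divisors.mpr ⟨⟨z + x, hf.symm⟩, hn2⟩
  apply Nat.card_le_card_of_injective (fun p => ⟨p.1.2 - p.1.1, hmem p⟩)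
  rintro ⟨⟨x1, z1⟩, hx1, hz1, h1⟩ ⟨⟨x2, z2⟩, hx2, hz2, h2⟩ hf
  simp only [Subtype.mk.injEq] at hf ⊢
  obtain ⟨hxz1, hf1⟩ := sol_fact hn h1
  obtain ⟨hxz2, hf2⟩ := sol_fact hn h2
  have hsum : (z1 - x1) * (z1 + x1) = (z1 - x1) * (z2 + x2) := by
    rw [hf1, hf, hf2]
  have hd : 0 < z1 - x1 := by omega
  have : z1 + x1 = z2 + x2 := Nat.eq_of_mul_eq_mul_left hd hsum
  have : x1 = x2 ∧ z1 = z2 := by omega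
  simp [Prod.ext_iff, this.1, this.2]

lemma term_bound (ε : ℝ) (hε : 0 < ε) (p a : ℕ) (hp : 2 ≤ p) (ha : 1 ≤ a) :
    ((a : ℝ) + 1) ≤
      (if p < ⌈(2:ℝ) ^ (1/ε)⌉₊ then max 1 (2 / (ε * Real.log 2)) else 1)
        * (p : ℝ) ^ ((a : ℝ) * ε) := by
  have hp' : (2:ℝ) ≤ (p:ℝ) := by exact_mod_cast hp
  have ha' : (1:ℝ) ≤ (a:ℝ) := by exact_mod_cast ha
  split_ifs with h
  · set M : ℝ := max 1 (2 / (ε * Real.log 2)) with hMdef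
    have hlog : 0 < Real.log 2 := Real.log_pos (by norm_num)
    have hM0 : (0:ℝ) ≤ M := le_trans zero_le_one (le_max_left _ _)
    have hMge : 2 / (ε * Real.log 2) ≤ M := le_max_right _ _
    have h2 : (2:ℝ) ^ ((a:ℝ) * ε) ≤ (p:ℝ) ^ ((a:ℝ) * ε) :=
      Real.rpow_le_rpow (by norm_num) hp' (by positivity)
    have h3 : Real.log 2 * ((a:ℝ) * ε) + 1 ≤ (2:ℝ) ^ ((a:ℝ) * ε) := by
      rw [Real.rpow_def_of_pos (by norm_num)]
      exact Real.add_one_le_exp _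
    have hX0 : 0 ≤ Real.log 2 * ((a:ℝ) * ε) := by positivity
    have step1 : M * (Real.log 2 * ((a:ℝ) * ε) + 1) ≤ M * (2:ℝ) ^ ((a:ℝ) * ε) :=
      mul_le_mul_of_nonneg_left h3 hM0
    have step2 : M * (2:ℝ) ^ ((a:ℝ) * ε) ≤ M * (p:ℝ) ^ ((a:ℝ) * ε) :=
      mul_le_mul_of_nonneg_left h2 hM0
    have step3 : (2 / (ε * Real.log 2)) * (Real.log 2 * ((a:ℝ) * ε)) ≤
        M * (Real.log 2 * ((a:ℝ) * ε)) := mul_le_mul_of_nonneg_right hMge hX0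
    have step4 : (2 / (ε * Real.log 2)) * (Real.log 2 * ((a:ℝ) * ε)) = 2 * (a:ℝ) := by
      field_simp
    have hM1 : (1:ℝ) ≤ M := le_max_left _ _
    nlinarith [step1, step2, step3, step4, hM1, ha']
  · push_neg at h
    have h2p : (2:ℝ) ^ (1/ε) ≤ (p:ℝ) := by
      have := Nat.ceil_le.mp h
      exact this
    have h2 : (2:ℝ) ≤ (p:ℝ) ^ ε := by
      calc (2:ℝ) = ((2:ℝ) ^ (1/ε)) ^ ε := by
            rw [← Real.rpow_mul (by norm_num), one_div_mul_cancel hε.ne', Real.rpow_one]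
        _ ≤ (p:ℝ) ^ ε := Real.rpow_le_rpow (by positivity) h2p hε.le
    have hrw : (p:ℝ) ^ ((a:ℝ) * ε) = ((p:ℝ) ^ ε) ^ a := by
      rw [mul_comm, Real.rpow_mul (by positivity), Real.rpow_natCast]
    rw [one_mul, hrw]
    have h2a : ((a:ℝ) + 1) ≤ (2:ℝ) ^ a := by
      have := Nat.lt_two_pow_self (n := a)
      have : a + 1 ≤ 2 ^ a := this
      exact_mod_cast this
    calc ((a:ℝ) + 1) ≤ (2:ℝ) ^ a := h2a
      _ ≤ ((p:ℝ) ^ ε) ^ a := pow_le_pow_left₀ (by norm_num) h2 a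

lemma card_divisors_le (ε : ℝ) (hε : 0 < ε) :
    ∃ C : ℝ, 0 ≤ C ∧ ∀ n : ℕ, n ≠ 0 → ((n.divisors.card : ℝ)) ≤ C * (n : ℝ) ^ ε := by
  set M : ℝ := max 1 (2 / (ε * Real.log 2)) with hMdef
  set B : ℕ := ⌈(2:ℝ) ^ (1/ε)⌉₊ with hBdef
  have hM1 : (1:ℝ) ≤ M := le_max_left _ _
  have hM0 : (0:ℝ) ≤ M := le_trans zero_le_one hM1
  refine ⟨M ^ B, by positivity, ?_⟩
  intro n hn
  set c : ℕ → ℝ := fun p => if p < B then M else 1 with hcdef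
  have hc1 : ∀ p, (1:ℝ) ≤ c p := by
    intro p; simp only [hcdef]; split_ifs <;> simp [hM1]
  have hprod : ((n:ℝ)) ^ ε
      = ∏ p ∈ n.primeFactors, (p:ℝ) ^ ((n.factorization p : ℝ) * ε) := by
    conv_lhs => rw [← Nat.factorization_prod_pow_eq_self hn]
    rw [Finsupp.prod, Nat.support_factorization, Nat.cast_prod]
    rw [← Real.finset_prod_rpow _ _ (fun p _ => by positivity) ε]
    refine Finset.prod_congr rfl fun p hp => ?_
    rw [Nat.cast_pow, ← Real.rpow_natCast (p:ℝ) (n.factorization p),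
      ← Real.rpow_mul (by positivity)]
  have hcard : ((n.divisors.card : ℝ))
      = ∏ p ∈ n.primeFactors, ((n.factorization p : ℝ) + 1) := by
    rw [Nat.card_divisors hn]
    push_cast
    rfl
  have hterm : ∀ p ∈ n.primeFactors,
      ((n.factorization p : ℝ) + 1) ≤ c p * (p:ℝ) ^ ((n.factorization p : ℝ) * ε) := by
    intro p hp
    obtain ⟨hpp, hpdvd, -⟩ := Nat.mem_primeFactors.mp hp
    exact term_bound ε hε p _ hpp.two_le
      ((Nat.Prime.factorization_pos_of_dvd hpp hn hpdvd))
  have h1 : ((n.divisors.card : ℝ))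
      ≤ ∏ p ∈ n.primeFactors, (c p * (p:ℝ) ^ ((n.factorization p : ℝ) * ε)) := by
    rw [hcard]
    exact Finset.prod_le_prod (fun p _ => by positivity) hterm
  have hcbound : ∏ p ∈ n.primeFactors, c p ≤ M ^ B := by
    have hfilter : ∏ p ∈ n.primeFactors.filter (· < B), c p
        = ∏ p ∈ n.primeFactors, c p := by
      apply Finset.prod_filter_of_ne
      intro p _ hne
      by_contra hc
      simp only [hcdef, if_neg hc] at hne
      exact hne rfl
    rw [← hfilter]
    calc ∏ p ∈ n.primeFactors.filter (· < B), c p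
        ≤ M ^ (n.primeFactors.filter (· < B)).card := by
          rw [← Finset.prod_const]
          refine Finset.prod_le_prod (fun p _ => le_trans zero_le_one (hc1 p)) ?_
          intro p _; simp only [hcdef]; split_ifs <;> simp [hM1]
      _ ≤ M ^ B := by
          apply pow_le_pow_right₀ hM1
          have : n.primeFactors.filter (· < B) ⊆ Finset.range B := by
            intro p hp
            simp only [Finset.mem_filter] at hp
            exact Finset.mem_range.mpr hp.2
          simpa using Finset.card_le_card this
  calc ((n.divisors.card : ℝ))
      ≤ ∏ p ∈ n.primeFactors, (c p * (p:ℝ) ^ ((n.factorization p : ℝ) * ε)) := h1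
    _ = (∏ p ∈ n.primeFactors, c p)
        * ∏ p ∈ n.primeFactors, (p:ℝ) ^ ((n.factorization p : ℝ) * ε) :=
        Finset.prod_mul_distrib
    _ ≤ M ^ B * (n:ℝ) ^ ε := by
        rw [hprod]
        apply mul_le_mul_of_nonneg_right hcbound
        exact Finset.prod_nonneg fun p _ => by positivity

lemma kappa_bound (ε : ℝ) (hε : 0 < ε) :
    ∃ C : ℝ, 0 ≤ C ∧ ∀ n : ℕ, 1 ≤ n → ((kappa n : ℝ)) ≤ C * (n : ℝ) ^ ε := by
  obtain ⟨C, hC0, hC⟩ := card_divisors_le (ε/2) (by positivity)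
  refine ⟨C, hC0, fun n hn => ?_⟩
  have hn0 : (0:ℝ) ≤ (n:ℝ) := by positivity
  have h1 : ((kappa n : ℝ)) ≤ (((n ^ 2).divisors.card : ℕ) : ℝ) := by
    exact_mod_cast kappa_le n hn
  have h2 := hC (n ^ 2) (by positivity)
  have h3 : ((n ^ 2 : ℕ) : ℝ) ^ (ε/2) = (n:ℝ) ^ ε := by
    push_cast
    rw [← Real.rpow_natCast (n:ℝ) 2, ← Real.rpow_mul hn0]
    norm_num
    rw [show (2:ℝ) * (ε / 2) = ε by ring]
  rw [h3] at h2
  linarith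

/-- M. Brancheva: `κ(n) = O(n^ε)` for every `ε > 0`; in
particular `κ(n)/n^ε → 0` as `n → ∞`. -/
theorem kappa_isBigO_rpow_and_tendsto_zero :
    ∀ ε : ℝ, 0 < ε →
      ((fun n : ℕ => (kappa n : ℝ)) =O[atTop] fun n : ℕ => (n : ℝ) ^ ε) ∧
      Tendsto (fun n : ℕ => (kappa n : ℝ) / (n : ℝ) ^ ε) atTop (nhds 0) := by
  intro ε hε
  constructor
  · obtain ⟨C, hC0, hC⟩ := kappa_bound ε hε
    rw [isBigO_iff]
    refine ⟨C, ?_⟩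
    filter_upwards [eventually_ge_atTop 1] with n hn
    have hn0 : (0:ℝ) < (n:ℝ) := by exact_mod_cast hn
    rw [Real.norm_eq_abs, Real.norm_eq_abs, abs_of_nonneg (by positivity),
      abs_of_nonneg (by positivity)]
    exact hC n hn
  · obtain ⟨C, hC0, hC⟩ := kappa_bound (ε/2) (by positivity)
    apply squeeze_zero' (g := fun n : ℕ => C * (n:ℝ) ^ (-(ε/2)))
    · filter_upwards with n
      positivity
    · filter_upwards [eventually_ge_atTop 1] with n hn
      have hn0 : (0:ℝ) < (n:ℝ) := by exact_mod_cast hn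
      have h1 : ((kappa n : ℝ)) / (n:ℝ) ^ ε ≤ (C * (n:ℝ) ^ (ε/2)) / (n:ℝ) ^ ε :=
        div_le_div_of_nonneg_right ?_ (by positivity) |>.trans_eq rfl
      · calc ((kappa n : ℝ)) / (n:ℝ) ^ ε ≤ (C * (n:ℝ) ^ (ε/2)) / (n:ℝ) ^ ε := h1
          _ = C * ((n:ℝ) ^ (ε/2) / (n:ℝ) ^ ε) := by ring
          _ = C * (n:ℝ) ^ (-(ε/2)) := by
              rw [← Real.rpow_sub hn0, show ε / 2 - ε = -(ε/2) by ring]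
      · exact hC n hn
    · have h0 : Tendsto (fun x : ℝ => x ^ (-(ε/2))) atTop (nhds 0) :=
        tendsto_rpow_neg_atTop (by positivity)
      have h1 : Tendsto (fun n : ℕ => ((n:ℝ)) ^ (-(ε/2))) atTop (nhds 0) :=
        h0.comp tendsto_natCast_atTop_atTop
      simpa using h1.const_mul C
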